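/- Let G be a finite simple graph and L a list assignment on G with |L(v)| ≥ 4 for every vertex v. Suppose S is a set of five vertices of G such that the induced subgraph G[S] is isomorphic to W_4 (the complete graph K_5 minus two edges sharing no endpoint, i.e. a 4-cycle together with a hub adjacent to all four cycle vertices), four of the vertices of S have degree 4 in G and one vertex of S has degree 5 in G. If the induced subgraph of G on V(G) \ S has a proper L-coloring, then G has a proper L-coloring. -/

import Mathlib

open SimpleGraph

/-- `W₄`: the complete graph `K₅` minus two edges sharing no endpoint; equivalently the
4-cycle `0-1-2-3-0` together with the hub `4` adjacent to all four cycle vertices. -/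
def W4 : SimpleGraph (Fin 5) :=
  (⊤ : SimpleGraph (Fin 5)).deleteEdges {s((0 : Fin 5), (2 : Fin 5)), s((1 : Fin 5), (3 : Fin 5))}


open Finset in

-- helper: pick element of nonempty
lemma card_pos_exists {A : Finset ℕ} (h : 1 ≤ A.card) : ∃ a, a ∈ A :=
  Finset.card_pos.mp h

lemma erase_card_ge {A : Finset ℕ} {n : ℕ} (h : n + 1 ≤ A.card) (x : ℕ) :
    n ≤ (A.erase x).card := by
  have := Finset.pred_card_le_card_erase (a := x) (s := A)
  omega

-- c4 auxiliary: b ∈ B, b ∉ A, b ∉ D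
lemma c4_aux (A C D : Finset ℕ) (hA : 2 ≤ A.card) (hC : 2 ≤ C.card) (hD : 2 ≤ D.card)
    (b : ℕ) (hbA : b ∉ A) (hbD : b ∉ D) :
    ∃ a ∈ A, ∃ c ∈ C, ∃ d ∈ D, a ≠ b ∧ b ≠ c ∧ c ≠ d ∧ d ≠ a := by
  obtain ⟨d1, d2, hd1, hd2, hne⟩ := Finset.one_lt_card_iff.mp (by omega : 1 < D.card)
  have key : ∃ d ∈ D, ((C.erase b).erase d).Nonempty := by
    by_cases h1 : ((C.erase b).erase d1).Nonempty
    · exact ⟨d1, hd1, h1⟩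
    · refine ⟨d2, hd2, ?_⟩
      rw [Finset.not_nonempty_iff_eq_empty] at h1
      have hsub : C ⊆ {b, d1} := by
        intro x hx
        by_contra hx'
        simp only [Finset.mem_insert, Finset.mem_singleton, not_or] at hx'
        have : x ∈ (C.erase b).erase d1 := by
          simp [Finset.mem_erase, hx'.1, hx'.2, hx]
        simp [h1] at this
      have hd1C : d1 ∈ C := by
        obtain ⟨c1, c2, hc1, hc2, hcne⟩ := Finset.one_lt_card_iff.mp (by omega : 1 < C.card)
        rcases Finset.mem_insert.mp (hsub hc1) with h | h <;>
        rcases Finset.mem_insert.mp (hsub hc2) with h' | h' <;>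
          simp_all
      exact ⟨d1, Finset.mem_erase.mpr ⟨hne, Finset.mem_erase.mpr
        ⟨fun h => hbD (h ▸ hd1), hd1C⟩⟩⟩
  obtain ⟨d, hdD, c, hc⟩ := key
  simp only [Finset.mem_erase] at hc
  obtain ⟨a, ha⟩ := card_pos_exists (erase_card_ge (n := 1) hA d)
  simp only [Finset.mem_erase] at ha
  exact ⟨a, ha.2, c, hc.2.2, d, hdD, fun h => hbA (h ▸ ha.2), fun h => hc.2.1 h.symm,
    hc.1, fun h => ha.1 h.symm⟩

lemma c4_choosable (A B C D : Finset ℕ) (hA : 2 ≤ A.card) (hB : 2 ≤ B.card)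
    (hC : 2 ≤ C.card) (hD : 2 ≤ D.card) :
    ∃ a ∈ A, ∃ b ∈ B, ∃ c ∈ C, ∃ d ∈ D, a ≠ b ∧ b ≠ c ∧ c ≠ d ∧ d ≠ a := by
  by_cases hAC : (A ∩ C).Nonempty
  · obtain ⟨x, hx⟩ := hAC
    rw [Finset.mem_inter] at hx
    obtain ⟨b, hb⟩ := card_pos_exists (erase_card_ge (n := 1) hB x)
    obtain ⟨d, hd⟩ := card_pos_exists (erase_card_ge (n := 1) hD x)
    rw [Finset.mem_erase] at hb hd
    exact ⟨x, hx.1, b, hb.2, x, hx.2, d, hd.2, Ne.symm hb.1, hb.1, Ne.symm hd.1, hd.1⟩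
  by_cases hBD : (B ∩ D).Nonempty
  · obtain ⟨y, hy⟩ := hBD
    rw [Finset.mem_inter] at hy
    obtain ⟨a, ha⟩ := card_pos_exists (erase_card_ge (n := 1) hA y)
    obtain ⟨c, hc⟩ := card_pos_exists (erase_card_ge (n := 1) hC y)
    rw [Finset.mem_erase] at ha hc
    exact ⟨a, ha.2, y, hy.1, c, hc.2, y, hy.2, ha.1, fun h => hc.1 h.symm, hc.1,
      fun h => ha.1 h.symm⟩
  · obtain ⟨b, hb⟩ := card_pos_exists (by omega : 1 ≤ B.card)
    have hbnotboth : b ∉ A ∨ b ∉ C := by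
      by_contra h
      push_neg at h
      exact hAC ⟨b, Finset.mem_inter.mpr ⟨h.1, h.2⟩⟩
    have hbD : b ∉ D := fun h => hBD ⟨b, Finset.mem_inter.mpr ⟨hb, h⟩⟩
    rcases hbnotboth with hbA | hbC
    · obtain ⟨a, ha, c, hc, d, hd, h1, h2, h3, h4⟩ := c4_aux A C D hA hC hD b hbA hbD
      exact ⟨a, ha, b, hb, c, hc, d, hd, h1, h2, h3, h4⟩
    · obtain ⟨c, hc, a, ha, d, hd, h1, h2, h3, h4⟩ := c4_aux C A D hC hA hD b hbC hbD
      exact ⟨a, ha, b, hb, c, hc, d, hd, fun h => h2 h.symm, fun h => h1 h.symm,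
        fun h => h4 h.symm, fun h => h3 h.symm⟩

-- fan auxiliary: given c ∈ C with c ∉ B, color path b-c-d plus hub e
lemma fan_aux (B D E : Finset ℕ) (hB : 2 ≤ B.card) (hD : 2 ≤ D.card) (hE : 3 ≤ E.card)
    (c : ℕ) (hcB : c ∉ B) :
    ∃ b ∈ B, ∃ d ∈ D, ∃ e ∈ E, b ≠ c ∧ c ≠ d ∧ e ≠ b ∧ e ≠ c ∧ e ≠ d := by
  obtain ⟨e1, e2, e3, he1, he2, he3, h12, h13, h23⟩ := Finset.two_lt_card_iff.mp
    (by omega : 2 < E.card)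
  have key : ∃ e ∈ E, e ≠ c ∧ ((D.erase c).erase e).Nonempty := by
    by_contra h
    push_neg at h
    have bad : ∀ x, x ∈ E → x ≠ c → D ⊆ {c, x} := by
      intro x hx hxc
      have := h x hx hxc
      intro y hy
      by_contra hy'
      simp only [Finset.mem_insert, Finset.mem_singleton, not_or] at hy'
      have : y ∈ (D.erase c).erase x := by
        simp [Finset.mem_erase, hy'.1, hy'.2, hy]
      simp_all
    -- at least two of e1,e2,e3 are ≠ c; both give D ⊆ {c,·}, so D ⊆ {c}
    have two : ∃ x y, x ∈ E ∧ y ∈ E ∧ x ≠ y ∧ x ≠ c ∧ y ≠ c := by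
      by_cases h1 : e1 = c
      · exact ⟨e2, e3, he2, he3, h23, fun h => h12 (h1 ▸ h ▸ rfl), fun h => h13 (h1 ▸ h ▸ rfl)⟩
      · by_cases h2 : e2 = c
        · exact ⟨e1, e3, he1, he3, h13, h1, fun h => h23 (h2 ▸ h ▸ rfl)⟩
        · exact ⟨e1, e2, he1, he2, h12, h1, h2⟩
    obtain ⟨x, y, hx, hy, hxy, hxc, hyc⟩ := two
    have hsub : D ⊆ {c} := by
      intro z hz
      rcases Finset.mem_insert.mp (bad x hx hxc hz) with h | h
      · simp [h]
      · rcases Finset.mem_insert.mp (bad y hy hyc hz) with h' | h'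
        · simp [h']
        · exact absurd (Finset.mem_singleton.mp h ▸ Finset.mem_singleton.mp h') hxy
    have := Finset.card_le_card hsub
    simp at this
    omega
  obtain ⟨e, heE, hec, d, hd⟩ := key
  simp only [Finset.mem_erase] at hd
  obtain ⟨b, hb⟩ := card_pos_exists (erase_card_ge (n := 1) hB e)
  rw [Finset.mem_erase] at hb
  exact ⟨b, hb.2, d, hd.2.2, e, heE, fun h => hcB (h ▸ hb.2), Ne.symm hd.2.1,
    Ne.symm hb.1, hec, Ne.symm hd.1⟩

-- the fan: path b-c-d plus hub e adjacent to all three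
lemma fan (B C D E : Finset ℕ) (hB : 2 ≤ B.card) (hC : 3 ≤ C.card) (hD : 2 ≤ D.card)
    (hE : 3 ≤ E.card) :
    ∃ b ∈ B, ∃ c ∈ C, ∃ d ∈ D, ∃ e ∈ E, b ≠ c ∧ c ≠ d ∧ e ≠ b ∧ e ≠ c ∧ e ≠ d := by
  by_cases hBD : (B ∩ D).Nonempty
  · obtain ⟨x, hx⟩ := hBD
    rw [Finset.mem_inter] at hx
    have hCx := erase_card_ge (n := 2) hC x
    obtain ⟨c, hc⟩ := card_pos_exists (show 1 ≤ (C.erase x).card by omega)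
    rw [Finset.mem_erase] at hc
    obtain ⟨e, he⟩ := card_pos_exists (erase_card_ge (n := 1)
      (erase_card_ge (n := 2) hE x) c)
    rw [Finset.mem_erase, Finset.mem_erase] at he
    exact ⟨x, hx.1, c, hc.2, x, hx.2, e, he.2.2, Ne.symm hc.1, hc.1, he.2.1, he.1, he.2.1⟩
  · obtain ⟨c, hcC⟩ := card_pos_exists (by omega : 1 ≤ C.card)
    have : c ∉ B ∨ c ∉ D := by
      by_contra h
      push_neg at h
      exact hBD ⟨c, Finset.mem_inter.mpr h⟩
    rcases this with hcB | hcD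
    · obtain ⟨b, hb, d, hd, e, he, h1, h2, h3, h4, h5⟩ := fan_aux B D E hB hD hE c hcB
      exact ⟨b, hb, c, hcC, d, hd, e, he, h1, h2, h3, h4, h5⟩
    · obtain ⟨d, hd, b, hb, e, he, h1, h2, h3, h4, h5⟩ := fan_aux D B E hD hB hE c hcD
      exact ⟨b, hb, c, hcC, d, hd, e, he, Ne.symm h2, Ne.symm h1, h5, h4, h3⟩

-- Case B: cycle a-b-c-d, hub e; |A|≥2, |B|,|C|,|D|≥3, |E|≥4
lemma w4B (A B C D E : Finset ℕ) (hA : 2 ≤ A.card) (hB : 3 ≤ B.card) (hC : 3 ≤ C.card)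
    (hD : 3 ≤ D.card) (hE : 4 ≤ E.card) :
    ∃ a ∈ A, ∃ b ∈ B, ∃ c ∈ C, ∃ d ∈ D, ∃ e ∈ E,
      a ≠ b ∧ b ≠ c ∧ c ≠ d ∧ d ≠ a ∧ e ≠ a ∧ e ≠ b ∧ e ≠ c ∧ e ≠ d := by
  obtain ⟨a, haA⟩ := card_pos_exists (by omega : 1 ≤ A.card)
  obtain ⟨b, hb, c, hc, d, hd, e, he, h1, h2, h3, h4, h5⟩ :=
    fan (B.erase a) C (D.erase a) (E.erase a)
      (erase_card_ge (n := 2) hB a) hC (erase_card_ge (n := 2) hD a)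
      (erase_card_ge (n := 3) hE a)
  rw [Finset.mem_erase] at hb hd he
  exact ⟨a, haA, b, hb.2, c, hc, d, hd.2, e, he.2, Ne.symm hb.1, h1, h2, hd.1,
    he.1, h3, h4, h5⟩

-- Case A: all cycle lists ≥3, hub ≥3
lemma w4A (A B C D E : Finset ℕ) (hA : 3 ≤ A.card) (hB : 3 ≤ B.card) (hC : 3 ≤ C.card)
    (hD : 3 ≤ D.card) (hE : 3 ≤ E.card) :
    ∃ a ∈ A, ∃ b ∈ B, ∃ c ∈ C, ∃ d ∈ D, ∃ e ∈ E,
      a ≠ b ∧ b ≠ c ∧ c ≠ d ∧ d ≠ a ∧ e ≠ a ∧ e ≠ b ∧ e ≠ c ∧ e ≠ d := by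
  obtain ⟨x, hxE⟩ := card_pos_exists (by omega : 1 ≤ E.card)
  obtain ⟨a, ha, b, hb, c, hc, d, hd, h1, h2, h3, h4⟩ :=
    c4_choosable (A.erase x) (B.erase x) (C.erase x) (D.erase x)
      (erase_card_ge (n := 2) hA x) (erase_card_ge (n := 2) hB x)
      (erase_card_ge (n := 2) hC x) (erase_card_ge (n := 2) hD x)
  rw [Finset.mem_erase] at ha hb hc hd
  exact ⟨a, ha.2, b, hb.2, c, hc.2, d, hd.2, x, hxE, h1, h2, h3, h4,
    Ne.symm ha.1, Ne.symm hb.1, Ne.symm hc.1, Ne.symm hd.1⟩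

lemma w4_adj_iff (i j : Fin 5) : W4.Adj i j ↔ i ≠ j ∧
    ¬((i = 0 ∧ j = 2) ∨ (i = 2 ∧ j = 0) ∨ (i = 1 ∧ j = 3) ∨ (i = 3 ∧ j = 1)) := by
  simp [W4, deleteEdges, Sym2.eq_iff, top_adj]
  tauto

instance : DecidableRel W4.Adj := fun i j => decidable_of_iff' _ (w4_adj_iff i j)

lemma w4_coloring (M : Fin 5 → Finset ℕ)
    (h : ((∀ i, i ≠ 4 → 3 ≤ (M i).card) ∧ 3 ≤ (M 4).card) ∨
      (∃ k : Fin 5, k ≠ 4 ∧ 2 ≤ (M k).card ∧ (∀ i, i ≠ 4 → i ≠ k → 3 ≤ (M i).card) ∧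
        4 ≤ (M 4).card)) :
    ∃ c : Fin 5 → ℕ, (∀ i, c i ∈ M i) ∧ ∀ i j, W4.Adj i j → c i ≠ c j := by
  have build : ∀ a b c d e : ℕ, a ∈ M 0 → b ∈ M 1 → c ∈ M 2 → d ∈ M 3 → e ∈ M 4 →
      a ≠ b → b ≠ c → c ≠ d → d ≠ a → e ≠ a → e ≠ b → e ≠ c → e ≠ d →
      ∃ col : Fin 5 → ℕ, (∀ i, col i ∈ M i) ∧ ∀ i j, W4.Adj i j → col i ≠ col j := by
    intro a b c d e ha hb hc hd he h1 h2 h3 h4 h5 h6 h7 h8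
    refine ⟨![a, b, c, d, e], ?_, ?_⟩
    · intro i; fin_cases i <;> simpa
    · intro i j hadj
      rw [w4_adj_iff] at hadj
      fin_cases i <;> fin_cases j <;> simp_all <;> omega
  rcases h with ⟨hcyc, hhub⟩ | ⟨k, hk4, hk, hoth, hhub⟩
  · obtain ⟨a, ha, b, hb, c, hc, d, hd, e, he, h1, h2, h3, h4, h5, h6, h7, h8⟩ :=
      w4A (M 0) (M 1) (M 2) (M 3) (M 4) (hcyc 0 (by decide)) (hcyc 1 (by decide))
        (hcyc 2 (by decide)) (hcyc 3 (by decide)) hhub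
    exact build a b c d e ha hb hc hd he h1 h2 h3 h4 h5 h6 h7 h8
  · fin_cases k
    · obtain ⟨a, ha, b, hb, c, hc, d, hd, e, he, h1, h2, h3, h4, h5, h6, h7, h8⟩ :=
        w4B (M 0) (M 1) (M 2) (M 3) (M 4) hk (hoth 1 (by decide) (by decide))
          (hoth 2 (by decide) (by decide)) (hoth 3 (by decide) (by decide)) hhub
      exact build a b c d e ha hb hc hd he h1 h2 h3 h4 h5 h6 h7 h8
    · obtain ⟨a, ha, b, hb, c, hc, d, hd, e, he, h1, h2, h3, h4, h5, h6, h7, h8⟩ :=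
        w4B (M 1) (M 2) (M 3) (M 0) (M 4) hk (hoth 2 (by decide) (by decide))
          (hoth 3 (by decide) (by decide)) (hoth 0 (by decide) (by decide)) hhub
      exact build d a b c e hd ha hb hc he h4 h1 h2 h3 h8 h5 h6 h7
    · obtain ⟨a, ha, b, hb, c, hc, d, hd, e, he, h1, h2, h3, h4, h5, h6, h7, h8⟩ :=
        w4B (M 2) (M 3) (M 0) (M 1) (M 4) hk (hoth 3 (by decide) (by decide))
          (hoth 0 (by decide) (by decide)) (hoth 1 (by decide) (by decide)) hhub
      exact build c d a b e hc hd ha hb he h3 h4 h1 h2 h7 h8 h5 h6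
    · obtain ⟨a, ha, b, hb, c, hc, d, hd, e, he, h1, h2, h3, h4, h5, h6, h7, h8⟩ :=
        w4B (M 3) (M 0) (M 1) (M 2) (M 4) hk (hoth 0 (by decide) (by decide))
          (hoth 1 (by decide) (by decide)) (hoth 2 (by decide) (by decide)) hhub
      exact build b c d a e hb hc hd ha he h2 h3 h4 h1 h6 h7 h8 h5
    · exact absurd rfl hk4

/-- Let `G` be a finite simple graph and `L` a list assignment with
`|L v| ≥ 4` for all `v`.  If `S` is a set of five vertices with `G[S] ≅ W₄`, four of the
vertices of `S` having degree `4` in `G` and one having degree `5` in `G`, and the induced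
subgraph of `G` on the complement of `S` has a proper `L`-coloring, then `G` has a proper
`L`-coloring. -/
theorem extend_coloring_W4 {V : Type*} [Fintype V]
    (G : SimpleGraph V) [DecidableRel G.Adj]
    (L : V → Finset ℕ) (hL : ∀ v, 4 ≤ (L v).card)
    (S : Set V) (hiso : Nonempty (G.induce S ≃g W4))
    (u : V) (hu : u ∈ S) (hu5 : G.degree u = 5)
    (hdeg4 : ∀ v ∈ S, v ≠ u → G.degree v = 4)
    (hcol : ∃ f : ↥(Sᶜ) → ℕ, (∀ v : ↥(Sᶜ), f v ∈ L ↑v) ∧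
      ∀ x y, (G.induce Sᶜ).Adj x y → f x ≠ f y) :
    ∃ f : V → ℕ, (∀ v, f v ∈ L v) ∧ ∀ x y, G.Adj x y → f x ≠ f y := by
  classical
  obtain ⟨g, hg1, hg2⟩ := hcol
  obtain ⟨e⟩ := hiso
  set a : Fin 5 → V := fun i => ((e.symm i : S) : V) with ha
  have haS : ∀ i, a i ∈ S := fun i => (e.symm i).2
  have hainj : Function.Injective a := by
    intro i j h
    exact e.symm.toEquiv.injective (Subtype.ext h)
  have hrt : ∀ v (hv : v ∈ S), a (e ⟨v, hv⟩) = v := by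
    intro v hv
    simp [ha]
  have hadj : ∀ i j, G.Adj (a i) (a j) ↔ W4.Adj i j := by
    intro i j
    have h2 : (G.induce S).Adj (e.symm i) (e.symm j) ↔ W4.Adj i j := e.symm.map_adj_iff
    exact h2
  -- internal degree counting
  have hsplit : ∀ i : Fin 5,
      ((G.neighborFinset (a i)).filter (fun w => w ∈ S)).card = W4.degree i := by
    intro i
    have himg : (G.neighborFinset (a i)).filter (fun w => w ∈ S)
        = (W4.neighborFinset i).image a := by
      ext w
      simp only [Finset.mem_filter, Finset.mem_image, mem_neighborFinset]
      constructor
      · rintro ⟨hadjw, hwS⟩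
        have hw : a (e ⟨w, hwS⟩) = w := hrt w hwS
        exact ⟨e ⟨w, hwS⟩, (hadj i _).mp (by rw [hw]; exact hadjw), hw⟩
      · rintro ⟨j, hj, rfl⟩
        exact ⟨(hadj i j).mpr hj, haS j⟩
    rw [himg, Finset.card_image_of_injective _ hainj]
    rfl
  have hdegsplit : ∀ i : Fin 5, ((G.neighborFinset (a i)).filter (fun w => ¬ w ∈ S)).card
      = G.degree (a i) - W4.degree i := by
    intro i
    have h1 := Finset.card_filter_add_card_filter_not
      (s := G.neighborFinset (a i)) (p := fun w => w ∈ S)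
    have h2 := hsplit i
    have h3 : (G.neighborFinset (a i)).card = G.degree (a i) := rfl
    omega
  have hW4deg : ∀ i : Fin 5, W4.degree i = if i = 4 then 4 else 3 := by decide
  -- forbidden colors and effective lists
  set gg : V → ℕ := fun w => if h : w ∈ Sᶜ then g ⟨w, h⟩ else 0 with hgg
  set F : Fin 5 → Finset ℕ :=
    fun i => ((G.neighborFinset (a i)).filter (fun w => ¬ w ∈ S)).image gg with hF
  set M : Fin 5 → Finset ℕ := fun i => L (a i) \ F i with hM
  have hFcard : ∀ i, (F i).card ≤ G.degree (a i) - W4.degree i := by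
    intro i
    rw [← hdegsplit i]
    exact Finset.card_image_le
  have hMcard : ∀ i, 4 - (G.degree (a i) - W4.degree i) ≤ (M i).card := by
    intro i
    have h1 := Finset.le_card_sdiff (F i) (L (a i))
    have h2 := hL (a i)
    have h3 := hFcard i
    have h4 : M i = L (a i) \ F i := rfl
    rw [h4]
    omega
  -- which vertex is u
  set k : Fin 5 := e ⟨u, hu⟩ with hk
  have hak : a k = u := hrt u hu
  have hdeg : ∀ i, G.degree (a i) = if i = k then 5 else 4 := by
    intro i
    by_cases hik : i = k
    · rw [hik, hak, if_pos rfl]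
      exact hu5
    · rw [if_neg hik]
      exact hdeg4 (a i) (haS i) (fun h => hik (hainj (h.trans hak.symm)))
  -- get the coloring of S
  obtain ⟨c, hc1, hc2⟩ := w4_coloring M (by
    by_cases hk4 : k = 4
    · left
      constructor
      · intro i hi4
        have := hMcard i
        rw [hdeg i, hW4deg i, if_neg hi4, if_neg (hk4 ▸ hi4 : i ≠ k)] at this
        omega
      · have := hMcard 4
        rw [hdeg 4, hW4deg 4, if_pos rfl, if_pos hk4.symm] at this
        omega
    · right
      refine ⟨k, hk4, ?_, ?_, ?_⟩
      · have := hMcard k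
        rw [hdeg k, hW4deg k, if_pos rfl, if_neg hk4] at this
        omega
      · intro i hi4 hik
        have := hMcard i
        rw [hdeg i, hW4deg i, if_neg hi4, if_neg hik] at this
        omega
      · have := hMcard 4
        rw [hdeg 4, hW4deg 4, if_pos rfl, if_neg (fun h => hk4 h.symm)] at this
        omega)
  -- assemble
  refine ⟨fun v => if h : v ∈ S then c (e ⟨v, h⟩) else g ⟨v, h⟩, ?_, ?_⟩
  · intro v
    dsimp only
    split_ifs with h
    · have h1 := hc1 (e ⟨v, h⟩)
      have h2 : M (e ⟨v, h⟩) = L (a (e ⟨v, h⟩)) \ F (e ⟨v, h⟩) := rfl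
      rw [h2, Finset.mem_sdiff, hrt v h] at h1
      exact h1.1
    · exact hg1 ⟨v, h⟩
  · intro x y hxy
    dsimp only
    have key : ∀ (z w : V) (hz : z ∈ S) (hw : ¬ w ∈ S), G.Adj z w →
        c (e ⟨z, hz⟩) ≠ g ⟨w, hw⟩ := by
      intro z w hz hw hzw
      have h1 := hc1 (e ⟨z, hz⟩)
      have h2 : M (e ⟨z, hz⟩) = L (a (e ⟨z, hz⟩)) \ F (e ⟨z, hz⟩) := rfl
      rw [h2, Finset.mem_sdiff] at h1
      intro hEq
      apply h1.2
      have hwmem : w ∈ (G.neighborFinset (a (e ⟨z, hz⟩))).filter (fun w => ¬ w ∈ S) := by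
        rw [Finset.mem_filter, mem_neighborFinset, hrt z hz]
        exact ⟨hzw, hw⟩
      have hggw : gg w = g ⟨w, hw⟩ := dif_pos hw
      have : gg w ∈ F (e ⟨z, hz⟩) := Finset.mem_image_of_mem gg hwmem
      rwa [hggw, ← hEq] at this
    split_ifs with hx hy hy
    · apply hc2
      apply (hadj _ _).mp
      rw [hrt x hx, hrt y hy]
      exact hxy
    · exact key x y hx hy hxy
    · exact fun h => key y x hy hx hxy.symm h.symm
    · exact hg2 ⟨x, hx⟩ ⟨y, hy⟩ hxy
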